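/- Any nonzero graded R-submodule of L has a homogeneous Gröbner basis. -/

import Mathlib

open MvPolynomial

/-- The set `𝕏ₑ` of monomials (power products) of the free module `L`:
a pair of a monomial exponent of `R = A[x₁,…,xₙ]` and a basis index. -/
abbrev Mon (n r : ℕ) := (Fin n →₀ ℕ) × Fin r

/-- The free module `L = R e₁ ⊕ ⋯ ⊕ R e_r` over `R = A[x₁,…,xₙ]`. -/
abbrev Lmod (A : Type*) [CommRing A] (n r : ℕ) := Fin r → MvPolynomial (Fin n) A

variable {A B : Type*} [CommRing A] [CommRing B] {n r : ℕ}

/-- The coefficient of `f ∈ L` at the monomial `X ∈ 𝕏ₑ`. -/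
def coeffL (f : Lmod A n r) (X : Mon n r) : A := MvPolynomial.coeff X.1 (f X.2)

/-- The element `c·X` of `L`, for a monomial `X ∈ 𝕏ₑ` and `c ∈ A`. -/
noncomputable def monL (X : Mon n r) (c : A) : Lmod A n r :=
  Pi.single X.2 (MvPolynomial.monomial X.1 c)

open Classical in
/-- The (finite) set of monomials appearing in `f ∈ L` with nonzero coefficient. -/
noncomputable def suppL (f : Lmod A n r) : Finset (Mon n r) :=
  Finset.univ.biUnion fun l => (f l).support.image fun d => (d, l)

/-- Multiplication of a monomial `𝐱 ∈ 𝕏` of `R` with a monomial `X ∈ 𝕏ₑ` of `L`. -/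
noncomputable def mulMon (x : Fin n →₀ ℕ) (X : Mon n r) : Mon n r := (x + X.1, X.2)

/-- `X ∣ Y` for monomials of `L` : `Y = 𝐱 X` for some monomial `𝐱` of `R`. -/
def MonDvd (X Y : Mon n r) : Prop := ∃ x : Fin n →₀ ℕ, Y = mulMon x X

/-- A term order on `𝕏ₑ`: a (linear) order such that (1) `X < 𝐱X` for `𝐱 ≠ 1`, and
(2) `X < Y → 𝐱X < 𝐱Y`. -/
def IsTermOrder (n r : ℕ) [LinearOrder (Mon n r)] : Prop :=
  (∀ (X : Mon n r) (x : Fin n →₀ ℕ), x ≠ 0 → X < mulMon x X) ∧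
  (∀ (X Y : Mon n r) (x : Fin n →₀ ℕ), X < Y → mulMon x X < mulMon x Y)

section Order
variable [LinearOrder (Mon n r)]

/-- The leading power product `lp f` of `f ∈ L` (with value `⊥` for `f = 0`). -/
noncomputable def lpW (f : Lmod A n r) : WithBot (Mon n r) := (suppL f).max

/-- The leading coefficient `lc f` of `f ∈ L` (with junk value `0` for `f = 0`). -/
noncomputable def lcL (f : Lmod A n r) : A :=
  if h : (suppL f).Nonempty then coeffL f ((suppL f).max' h) else 0

/-- The leading term `lt f` of `f ∈ L` (with value `0` for `f = 0`). -/
noncomputable def ltL (f : Lmod A n r) : Lmod A n r :=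
  if h : (suppL f).Nonempty then monL ((suppL f).max' h) (lcL f) else 0

/-- `Lt S` : the `R`-submodule of `L` generated by the leading terms of the
nonzero elements of `S`. -/
noncomputable def LtS (S : Set (Lmod A n r)) :
    Submodule (MvPolynomial (Fin n) A) (Lmod A n r) :=
  Submodule.span (MvPolynomial (Fin n) A) (ltL '' {f ∈ S | f ≠ 0})

/-- `lp g` divides the monomial `X`. -/
def lpDvdMon (g : Lmod A n r) (X : Mon n r) : Prop :=
  ∃ Y : Mon n r, lpW g = (Y : WithBot (Mon n r)) ∧ MonDvd Y X

/-- `lp g` divides `lp f`. -/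
def lpDvd (g f : Lmod A n r) : Prop :=
  ∃ Y Z : Mon n r, lpW g = (Y : WithBot (Mon n r)) ∧ lpW f = (Z : WithBot (Mon n r)) ∧
    MonDvd Y Z

/-- One reduction step `f →_F h`. -/
def Step (F : Finset (Lmod A n r)) (f h : Lmod A n r) : Prop :=
  ∃ (a : Lmod A n r → A) (x : Lmod A n r → (Fin n →₀ ℕ)),
    h = f - ∑ g ∈ F, a g • ((MvPolynomial.monomial (x g) (1 : A)) • g) ∧
    (∀ g ∈ F, a g ≠ 0 → lpW f = (lpW g).map (mulMon (x g))) ∧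
    ltL f = ∑ g ∈ F, a g • ((MvPolynomial.monomial (x g) (1 : A)) • ltL g)

/-- `f ⇒_F h` : `f` reduces to `h` modulo `F` (a finite chain of reduction steps). -/
def Red (F : Finset (Lmod A n r)) : Lmod A n r → Lmod A n r → Prop :=
  Relation.TransGen (Step F)

/-- `f` reduces strictly to `h` modulo `F` : `f ⇒_F h` and `lp h < lp f`. -/
def StrictRed (F : Finset (Lmod A n r)) (f h : Lmod A n r) : Prop :=
  Red F f h ∧ lpW h < lpW f

/-- `G` is a Gröbner basis for `M` : a finite subset of `M ∖ {0}` with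
`Lt G = Lt M`. -/
def IsGB (G : Finset (Lmod A n r))
    (M : Submodule (MvPolynomial (Fin n) A) (Lmod A n r)) : Prop :=
  (G : Set (Lmod A n r)) ⊆ (M : Set (Lmod A n r)) \ {0} ∧
  LtS (G : Set (Lmod A n r)) = LtS (M : Set (Lmod A n r))

open Classical in
/-- A Gröbner basis `G` is minimal if no `g ∈ G` can be strictly reduced with
respect to `G ∖ {g}`. -/
noncomputable def IsMinimalGB (G : Finset (Lmod A n r)) : Prop :=
  ∀ g ∈ G, ¬ ∃ h : Lmod A n r, StrictRed (G.erase g) g h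

/-- The set `T_G` of totally reduced vectors, relative to a choice of coset
representatives `C X ⊆ A` and of lifts `X̃ = til X`. -/
def TGset (C : Mon n r → Set A) (til : Mon n r → Lmod A n r) : Set (Lmod A n r) :=
  {f | ∃ coef : Mon n r →₀ A, (∀ X, coef X ∈ C X) ∧ f = coef.sum fun X c => c • til X}

end Order

section Graded
variable {𝕜 : Type*} [CommSemiring 𝕜] [Algebra 𝕜 A]

/-- `A = ⊕_{0 ≤ i < a} A_i` is a graded tdvr of length `a` with distinguished
element `ϖ ∈ A_1` : each `A_i` (`i < a`) is a one-dimensional `𝕜`-vector space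
generated by `ϖ^i`, and `A_i = 0` for `i ≥ a`. -/
def IsGradedTdvr (𝒜 : ℕ → Submodule 𝕜 A) (a : ℕ∞) (ϖ : A) : Prop :=
  1 ≤ a ∧ ϖ ∈ 𝒜 1 ∧
  (∀ i : ℕ, (i : ℕ∞) < a → (ϖ ^ i ≠ 0 ∧ 𝒜 i = Submodule.span 𝕜 {ϖ ^ i})) ∧
  (∀ i : ℕ, a ≤ (i : ℕ∞) → 𝒜 i = ⊥)

open Classical in
/-- The valuation of the graded tdvr `A` of length `a` : the smallest degree in
which `x` has a nonzero component, and `a` for `x = 0`. -/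
noncomputable def valA (𝒜 : ℕ → Submodule 𝕜 A) [GradedAlgebra 𝒜] (a : ℕ∞) (x : A) : ℕ∞ :=
  if x = 0 then a
  else sInf {m : ℕ∞ | ∃ i : ℕ, (i : ℕ∞) = m ∧ (DirectSum.decompose 𝒜 x i : A) ≠ 0}

/-- `f ∈ L` is homogeneous of degree `i` (i.e. `f ∈ L_i`): all its coefficients
lie in `A_i`. -/
def HomogL (𝒜 : ℕ → Submodule 𝕜 A) (i : ℕ) (f : Lmod A n r) : Prop :=
  ∀ X : Mon n r, coeffL f X ∈ 𝒜 i

/-- The degree-`i` part of `f ∈ L`, taken coefficientwise. -/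
noncomputable def compL (𝒜 : ℕ → Submodule 𝕜 A) [GradedAlgebra 𝒜] (i : ℕ)
    (f : Lmod A n r) : Lmod A n r := fun l =>
  ∑ d ∈ (f l).support,
    MvPolynomial.monomial d ((DirectSum.decompose 𝒜 (MvPolynomial.coeff d (f l)) i : A))

/-- `M` is a graded submodule of `L` : it contains the homogeneous components of
each of its elements. -/
def IsGradedSub (𝒜 : ℕ → Submodule 𝕜 A) [GradedAlgebra 𝒜]
    (M : Submodule (MvPolynomial (Fin n) A) (Lmod A n r)) : Prop :=
  ∀ f ∈ M, ∀ i : ℕ, compL 𝒜 i f ∈ M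

/-- `A^{<m} = ⊕_{0 ≤ i < m} A_i`. -/
def Aless (𝒜 : ℕ → Submodule 𝕜 A) (m : ℕ∞) : Submodule 𝕜 A :=
  ⨆ i ∈ {i : ℕ | (i : ℕ∞) < m}, 𝒜 i

open Classical in
/-- Truncation of `c ∈ A` to its components of degree `< m` (the action of `c`
on `A^{<m} = A/(⊕_{i ≥ m} A_i)`). -/
noncomputable def truncA (𝒜 : ℕ → Submodule 𝕜 A) [GradedAlgebra 𝒜] (m : ℕ∞) (c : A) : A :=
  ∑ i ∈ (DirectSum.decompose 𝒜 c).support.filter (fun i : ℕ => (i : ℕ∞) < m),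
    (DirectSum.decompose 𝒜 c i : A)

open Classical in
/-- The invariant `m_X` attached to a Gröbner basis `G` :
`m_X = min { v(lc g) | g ∈ G, lp g ∣ X }`, and `m_X = a` if no `lp g` divides `X`. -/
noncomputable def mXv [LinearOrder (Mon n r)] (𝒜 : ℕ → Submodule 𝕜 A) [GradedAlgebra 𝒜]
    (a : ℕ∞) (G : Finset (Lmod A n r)) (X : Mon n r) : ℕ∞ :=
  if ∃ g ∈ G, lpDvdMon g X then
    sInf {m : ℕ∞ | ∃ g ∈ G, lpDvdMon g X ∧ m = valA 𝒜 a (lcL g)}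
  else a

end Graded

section Tdvr

/-- `f ∈ I·L`, coefficientwise. -/
def memFil (I : Ideal A) (f : Lmod A n r) : Prop := ∀ X : Mon n r, coeffL f X ∈ I

/-- The symbol map `L → gr(L)` in degree `i`, applied coefficientwise
(`s = sym i : A → gr(A)` being the degree-`i` symbol map of the ring). -/
noncomputable def symL (s : A → B) (f : Lmod A n r) : Lmod B n r := fun l =>
  ∑ d ∈ (f l).support, MvPolynomial.monomial d (s (MvPolynomial.coeff d (f l)))

/-- The associated graded module `gr(M) ⊆ gr(L)` of a submodule `M ⊆ L`, with
respect to the `I`-adic filtration: the `gr(R)`-submodule generated by the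
symbols of the elements of `M ∩ I^i·L`, for all `i`. -/
noncomputable def grSub (I : Ideal A) (sym : ℕ → A → B)
    (M : Submodule (MvPolynomial (Fin n) A) (Lmod A n r)) :
    Submodule (MvPolynomial (Fin n) B) (Lmod B n r) :=
  Submodule.span (MvPolynomial (Fin n) B)
    {h : Lmod B n r | ∃ i : ℕ, ∃ f ∈ M, memFil (I ^ i) f ∧ h = symL (sym i) f}

end Tdvr

section MyAux

variable {A : Type*} [CommRing A] {n r : ℕ}

theorem my_mem_suppL {f : Lmod A n r} {X : Mon n r} : X ∈ suppL f ↔ coeffL f X ≠ 0 := by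
  obtain ⟨d, l⟩ := X
  constructor
  · intro h
    simp only [suppL, Finset.mem_biUnion, Finset.mem_image, Finset.mem_univ, true_and] at h
    obtain ⟨l', d', hd', heq⟩ := h
    obtain ⟨rfl, rfl⟩ := Prod.mk.injEq .. ▸ heq
    · simpa [coeffL] using MvPolynomial.mem_support_iff.1 hd'
  · intro h
    simp only [suppL, Finset.mem_biUnion, Finset.mem_image, Finset.mem_univ, true_and]
    exact ⟨l, d, MvPolynomial.mem_support_iff.2 h, rfl⟩

theorem my_suppL_nonempty_iff {f : Lmod A n r} : (suppL f).Nonempty ↔ f ≠ 0 := by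
  constructor
  · rintro ⟨X, hX⟩ rfl
    exact (my_mem_suppL.1 hX) (by simp [coeffL])
  · intro hf
    by_contra hne
    apply hf
    funext l
    apply MvPolynomial.ext
    intro d
    have h1 : (d, l) ∉ suppL f := by
      simp [Finset.not_nonempty_iff_eq_empty.1 hne]
    have := mt my_mem_suppL.2 h1
    simpa [coeffL] using not_not.1 this

theorem my_monL_add (X : Mon n r) (c c' : A) : monL X (c + c') = monL X c + monL X c' := by
  simp [monL, map_add, Pi.single_add]

theorem my_monL_sum {ι : Type*} (s : Finset ι) (c : ι → A) (X : Mon n r) :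
    monL X (∑ i ∈ s, c i) = ∑ i ∈ s, monL X (c i) := by
  classical
  induction s using Finset.induction with
  | empty => simp [monL]
  | insert _ _ h ih =>
    rw [Finset.sum_insert h, Finset.sum_insert h, my_monL_add, ih]

theorem my_ltL_eq [LinearOrder (Mon n r)] {f : Lmod A n r} (h : (suppL f).Nonempty) :
    ltL f = monL ((suppL f).max' h) (coeffL f ((suppL f).max' h)) := by
  rw [ltL, dif_pos h, lcL, dif_pos h]

end MyAux

section MyGraded

variable {k A : Type*} [Field k] [CommRing A] [Algebra k A]
variable {n r : ℕ}

theorem my_coeffL_compL (𝒜 : ℕ → Submodule k A) [GradedAlgebra 𝒜] (i : ℕ)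
    (f : Lmod A n r) (X : Mon n r) :
    coeffL (compL 𝒜 i f) X = (DirectSum.decompose 𝒜 (coeffL f X) i : A) := by
  classical
  unfold coeffL compL
  rw [MvPolynomial.coeff_sum]
  simp only [MvPolynomial.coeff_monomial]
  rw [Finset.sum_ite_eq' ((f X.2).support) X.1]
  by_cases h : X.1 ∈ (f X.2).support
  · simp [h]
  · rw [if_neg h, MvPolynomial.notMem_support_iff.1 h]
    simp

theorem tdvr_noetherian (𝒜 : ℕ → Submodule k A) [GradedAlgebra 𝒜] (a : ℕ∞) (ϖ : A)
    (htdvr : IsGradedTdvr 𝒜 a ϖ) : IsNoetherianRing A := by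
  classical
  have hsurj : Function.Surjective (Polynomial.aeval ϖ : Polynomial k →ₐ[k] A) := by
    intro x
    have hx : x = ∑ i ∈ (DirectSum.decompose 𝒜 x).support, (DirectSum.decompose 𝒜 x i : A) :=
      (DirectSum.sum_support_decompose 𝒜 x).symm
    have hmem : ∀ i : ℕ, (DirectSum.decompose 𝒜 x i : A) ∈
        (Polynomial.aeval ϖ : Polynomial k →ₐ[k] A).range := by
      intro i
      rcases lt_or_ge (i : ℕ∞) a with h | h
      · have heq := (htdvr.2.2.1 i h).2
        have hmem : (DirectSum.decompose 𝒜 x i : A) ∈ 𝒜 i := SetLike.coe_mem _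
        have hmem2 : (DirectSum.decompose 𝒜 x i : A) ∈ Submodule.span k {ϖ ^ i} := by
          rw [← heq]; exact hmem
        rw [Submodule.mem_span_singleton] at hmem2
        obtain ⟨c, hc⟩ := hmem2
        exact ⟨c • Polynomial.X ^ i, by simp [← hc, Algebra.smul_def]⟩
      · have heq := htdvr.2.2.2 i h
        have hmem : (DirectSum.decompose 𝒜 x i : A) ∈ 𝒜 i := SetLike.coe_mem _
        have hmem2 : (DirectSum.decompose 𝒜 x i : A) ∈ (⊥ : Submodule k A) := by
          rw [← heq]; exact hmem
        simp only [Submodule.mem_bot] at hmem2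
        exact ⟨0, by simp [hmem2]⟩
    rw [hx]
    exact Subalgebra.sum_mem _ fun i _ => hmem i
  exact isNoetherianRing_of_surjective (Polynomial k) A
    (Polynomial.aeval ϖ : Polynomial k →ₐ[k] A).toRingHom hsurj

end MyGraded

open Classical in
theorem my_span_eq_span_finite_subset {R M : Type*} [Semiring R] [AddCommMonoid M] [Module R M]
    (S : Set M) (hfg : (Submodule.span R S).FG) :
    ∃ T : Finset M, ↑T ⊆ S ∧ Submodule.span R (T : Set M) = Submodule.span R S := by
  obtain ⟨t, ht⟩ := hfg
  have hx : ∀ x ∈ t, x ∈ Submodule.span R S := fun x hx => ht ▸ Submodule.subset_span hx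
  choose T hTsub hTmem using fun x (h : x ∈ Submodule.span R S) =>
    Submodule.mem_span_finite_of_mem_span h
  refine ⟨t.attach.biUnion (fun x => T x.1 (hx x.1 x.2)), ?_, le_antisymm ?_ ?_⟩
  · intro y hy
    simp only [Finset.coe_biUnion, Set.mem_iUnion] at hy
    obtain ⟨x, hx', hy⟩ := hy
    exact hTsub _ _ hy
  · exact Submodule.span_mono (by
      intro y hy
      simp only [Finset.coe_biUnion, Set.mem_iUnion] at hy
      obtain ⟨x, hx', hy⟩ := hy
      exact hTsub _ _ hy)
  · rw [← ht, Submodule.span_le]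
    intro x hxt
    refine Submodule.span_mono ?_ (hTmem x (hx x hxt))
    intro y hy
    simp only [Finset.coe_biUnion, Set.mem_iUnion]
    exact ⟨⟨x, hxt⟩, Finset.mem_attach _ _, hy⟩

/-- over a graded tdvr `A`, any nonzero graded `R`-submodule of
`L` has a homogeneous Gröbner basis. -/
theorem exists_homogeneous_groebner {k A : Type*} [Field k] [CommRing A] [Algebra k A]
    (𝒜 : ℕ → Submodule k A) [GradedAlgebra 𝒜] (a : ℕ∞) (ϖ : A)
    (htdvr : IsGradedTdvr 𝒜 a ϖ)
    {n r : ℕ} (hr : 1 ≤ r) [LinearOrder (Mon n r)] (hto : IsTermOrder n r)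
    (M : Submodule (MvPolynomial (Fin n) A) (Lmod A n r)) (hM : M ≠ ⊥)
    (hMgr : IsGradedSub 𝒜 M) :
    ∃ G : Finset (Lmod A n r), IsGB G M ∧ ∀ g ∈ G, ∃ i : ℕ, HomogL 𝒜 i g := by
    classical
  have hnoethA : IsNoetherianRing A := tdvr_noetherian 𝒜 a ϖ htdvr
  have hnoethR : IsNoetherianRing (MvPolynomial (Fin n) A) := inferInstance
  -- the set of nonzero homogeneous elements of M
  set S : Set (Lmod A n r) := {f | f ∈ M ∧ f ≠ 0 ∧ ∃ i : ℕ, HomogL 𝒜 i f} with hS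
  -- key claim: Lt M = span (ltL '' S)
  have hkey : LtS (M : Set (Lmod A n r)) =
      Submodule.span (MvPolynomial (Fin n) A) (ltL '' S) := by
    apply le_antisymm
    · rw [LtS, Submodule.span_le]
      rintro - ⟨f, ⟨hfM, hf0⟩, rfl⟩
      have hsupp : (suppL f).Nonempty := my_suppL_nonempty_iff.2 hf0
      set X₀ := (suppL f).max' hsupp with hX₀
      have hlt : ltL f = monL X₀ (coeffL f X₀) := my_ltL_eq hsupp
      have hc0 : coeffL f X₀ ≠ 0 := my_mem_suppL.1 ((suppL f).max'_mem hsupp)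
      have hdec : coeffL f X₀ = ∑ i ∈ (DirectSum.decompose 𝒜 (coeffL f X₀)).support,
          (DirectSum.decompose 𝒜 (coeffL f X₀) i : A) :=
        (DirectSum.sum_support_decompose 𝒜 _).symm
      have hsum : ltL f = ∑ i ∈ (DirectSum.decompose 𝒜 (coeffL f X₀)).support,
          monL X₀ (DirectSum.decompose 𝒜 (coeffL f X₀) i : A) := by
        rw [hlt]
        conv_lhs => rw [hdec]
        exact my_monL_sum _ _ _
      rw [hsum]
      apply Submodule.sum_mem
      intro i hi
      have hdne : (DirectSum.decompose 𝒜 (coeffL f X₀) i : A) ≠ 0 := by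
        intro h0
        apply DFinsupp.mem_support_iff.1 hi
        exact Subtype.ext h0
      set g : Lmod A n r := compL 𝒜 i f with hg
      have hgc : ∀ X, coeffL g X = (DirectSum.decompose 𝒜 (coeffL f X) i : A) :=
        fun X => my_coeffL_compL 𝒜 i f X
      have hgM : g ∈ M := hMgr f hfM i
      have hg0 : g ≠ 0 := by
        intro h0
        apply hdne
        rw [← hgc X₀, h0]
        simp [coeffL]
      have hghom : HomogL 𝒜 i g := fun X => by rw [hgc]; exact SetLike.coe_mem _
      have hgsupp : suppL g ⊆ suppL f := by
        intro X hX
        apply my_mem_suppL.2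
        intro h0
        apply my_mem_suppL.1 hX
        rw [hgc, h0]
        simp
      have hX₀g : X₀ ∈ suppL g := my_mem_suppL.2 (by rw [hgc]; exact hdne)
      have hgne : (suppL g).Nonempty := ⟨X₀, hX₀g⟩
      have hmax : (suppL g).max' hgne = X₀ := by
        have h1 := Finset.max'_le (suppL g) hgne X₀
          (fun y hy => Finset.le_max' (suppL f) y (hgsupp hy))
        have h2 := Finset.le_max' (suppL g) X₀ hX₀g
        exact @le_antisymm _ (inferInstance : LinearOrder (Mon n r)).toPartialOrder _ _ h1 h2
      have hltg : ltL g = monL X₀ (DirectSum.decompose 𝒜 (coeffL f X₀) i : A) := by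
        rw [my_ltL_eq hgne, hmax, hgc]
      rw [← hltg]
      exact Submodule.subset_span ⟨g, ⟨hgM, hg0, i, hghom⟩, rfl⟩
    · rw [LtS]
      apply Submodule.span_mono
      apply Set.image_mono
      intro f hf
      exact ⟨hf.1, hf.2.1⟩
  -- Lt M is finitely generated
  have hfg : (Submodule.span (MvPolynomial (Fin n) A) (ltL '' S)).FG := by
    rw [← hkey]
    exact IsNoetherian.noetherian _
  obtain ⟨T, hTsub, hTspan⟩ := my_span_eq_span_finite_subset _ hfg
  choose φ hφS hφlt using fun (t : Lmod A n r) (ht : t ∈ T) =>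
    (hTsub ht : t ∈ ltL '' S)
  obtain ⟨φ', hφ'⟩ : ∃ φ' : Lmod A n r → Lmod A n r,
      ∀ t (ht : t ∈ T), φ' t = φ t ht := ⟨fun t => if h : t ∈ T then φ t h else 0,
        fun t ht => dif_pos ht⟩
  refine ⟨T.image φ', ⟨?_, ?_⟩, ?_⟩
  · rintro g hg
    simp only [Finset.coe_image, Set.mem_image, Finset.mem_coe] at hg
    obtain ⟨t, ht, rfl⟩ := hg
    rw [hφ' t ht]
    exact ⟨(hφS t ht).1, (hφS t ht).2.1⟩
  · apply le_antisymm
    · rw [LtS, LtS]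
      apply Submodule.span_mono
      apply Set.image_mono
      rintro g ⟨hg, hg0⟩
      simp only [Finset.coe_image, Set.mem_image, Finset.mem_coe] at hg
      obtain ⟨t, ht, rfl⟩ := hg
      rw [hφ' t ht] at hg0 ⊢
      exact ⟨(hφS t ht).1, hg0⟩
    · rw [hkey, ← hTspan, LtS, Submodule.span_le]
      intro t ht
      apply Submodule.subset_span
      refine ⟨φ' t, ⟨?_, ?_⟩, ?_⟩
      · simp only [Finset.coe_image, Set.mem_image, Finset.mem_coe]
        exact ⟨t, ht, rfl⟩
      · rw [hφ' t ht]; exact (hφS t ht).2.1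
      · rw [hφ' t ht]; exact hφlt t ht
  · intro g hg
    simp only [Finset.mem_image] at hg
    obtain ⟨t, ht, rfl⟩ := hg
    rw [hφ' t ht]
    exact (hφS t ht).2.2
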